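/- Every pure 3-qubit state has two-body sector length exactly A_2 = 3. -/

import Mathlib

open Matrix BigOperators Finset ComplexOrder

/-- The Pauli matrices, indexed by `Fin 4`: identity, X, Y, Z. -/
noncomputable def pauli : Fin 4 → Matrix (Fin 2) (Fin 2) ℂ
  | 0 => 1
  | 1 => !![0, 1; 1, 0]
  | 2 => !![0, -Complex.I; Complex.I, 0]
  | 3 => !![1, 0; 0, -1]

/-- An `n`-qubit Pauli word: the tensor product of the Pauli matrices `pauli (w i)`,
realized as a matrix indexed by `Fin n → Fin 2`. -/
noncomputable def pWord {n : ℕ} (w : Fin n → Fin 4) :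
    Matrix (Fin n → Fin 2) (Fin n → Fin 2) ℂ :=
  Matrix.of fun x y => ∏ i, pauli (w i) (x i) (y i)

/-- The weight of a Pauli word: the number of non-identity tensor factors. -/
def wt {n : ℕ} (w : Fin n → Fin 4) : ℕ :=
  (Finset.univ.filter fun i => w i ≠ 0).card

/-- The `k`-th sector length of an `n`-qubit matrix:
the sum of squared Pauli expectation values over Pauli words of weight `k`. -/
noncomputable def sector (n k : ℕ) (ρ : Matrix (Fin n → Fin 2) (Fin n → Fin 2) ℂ) : ℝ :=
  ∑ w ∈ Finset.univ.filter fun w : Fin n → Fin 4 => wt w = k,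
    ((pWord w * ρ).trace.re) ^ 2

/-- An `n`-qubit quantum state: positive semidefinite with unit trace. -/
def IsState {n : ℕ} (ρ : Matrix (Fin n → Fin 2) (Fin n → Fin 2) ℂ) : Prop :=
  ρ.PosSemidef ∧ ρ.trace = 1

section Aux

lemma sum_fn3 {β : Type*} [Fintype β] [DecidableEq β] {M : Type*} [AddCommMonoid M]
    (f : (Fin 3 → β) → M) :
    ∑ x : Fin 3 → β, f x = ∑ a : β, ∑ b : β, ∑ c : β, f ![a, b, c] := by
  rw [← (Fin.consEquiv fun _ : Fin 3 => β).sum_comp, Fintype.sum_prod_type]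
  congr 1; ext a
  rw [← (Fin.consEquiv fun _ : Fin 2 => β).sum_comp, Fintype.sum_prod_type]
  congr 1; ext b
  rw [← (Fin.consEquiv fun _ : Fin 1 => β).sum_comp, Fintype.sum_prod_type]
  congr 1; ext c
  rw [Fintype.sum_subsingleton _ ![]]
  rfl

lemma pauli_apply_00 : ∀ (i j : Fin 2), pauli 0 i j = if i = j then 1 else 0 := by
  intro i j; fin_cases i <;> fin_cases j <;> simp [pauli, Matrix.one_apply]

lemma p000 : pauli 0 0 0 = 1 := by simp [pauli_apply_00]
lemma p001 : pauli 0 0 1 = 0 := by simp [pauli_apply_00]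
lemma p010 : pauli 0 1 0 = 0 := by simp [pauli_apply_00]
lemma p011 : pauli 0 1 1 = 1 := by simp [pauli_apply_00]
lemma p100 : pauli 1 0 0 = 0 := by simp [pauli]
lemma p101 : pauli 1 0 1 = 1 := by simp [pauli]
lemma p110 : pauli 1 1 0 = 1 := by simp [pauli]
lemma p111 : pauli 1 1 1 = 0 := by simp [pauli]
lemma p200 : pauli 2 0 0 = 0 := by simp [pauli]
lemma p201 : pauli 2 0 1 = -Complex.I := by simp [pauli]
lemma p210 : pauli 2 1 0 = Complex.I := by simp [pauli]
lemma p211 : pauli 2 1 1 = 0 := by simp [pauli]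
lemma p300 : pauli 3 0 0 = 1 := by simp [pauli]
lemma p301 : pauli 3 0 1 = 0 := by simp [pauli]
lemma p310 : pauli 3 1 0 = 0 := by simp [pauli]
lemma p311 : pauli 3 1 1 = -1 := by simp [pauli]

lemma pauli_star (a : Fin 4) (x y : Fin 2) :
    (starRingEnd ℂ) (pauli a x y) = pauli a y x := by
  fin_cases a <;> fin_cases x <;> fin_cases y <;>
    simp [pauli, Matrix.one_apply]

lemma pWord_conjTranspose {n : ℕ} (w : Fin n → Fin 4) : (pWord w)ᴴ = pWord w := by
  ext x y
  simp only [conjTranspose_apply, pWord, Matrix.of_apply, Complex.star_def, map_prod, pauli_star]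

lemma trace_pWord_real {n : ℕ} (w : Fin n → Fin 4) (ρ : Matrix (Fin n → Fin 2) (Fin n → Fin 2) ℂ)
    (hH : ρ.IsHermitian) : ((pWord w * ρ).trace).im = 0 := by
  have h : (starRingEnd ℂ) ((pWord w * ρ).trace) = (pWord w * ρ).trace := by
    calc (starRingEnd ℂ) ((pWord w * ρ).trace) = ((pWord w * ρ)ᴴ).trace := by
          rw [trace_conjTranspose]; rfl
      _ = (ρᴴ * (pWord w)ᴴ).trace := by rw [conjTranspose_mul]
      _ = (ρ * pWord w).trace := by rw [hH.eq, pWord_conjTranspose]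
      _ = (pWord w * ρ).trace := trace_mul_comm _ _
  exact Complex.conj_eq_iff_im.mp h

lemma exists_rank_one {m : Type*} [Fintype m] [DecidableEq m]
    (ρ : Matrix m m ℂ) (h : ρ.PosSemidef) (ht : ρ.trace = 1) (hpure : ρ * ρ = ρ) :
    ∃ ψ : m → ℂ, ∀ x y, ρ x y = ψ x * (starRingEnd ℂ) (ψ y) := by
  have hH := h.1
  have hst := hH.spectral_theorem
  simp only [Unitary.conjStarAlgAut_apply, Unitary.coe_star] at hst
  set U : Matrix m m ℂ := (hH.eigenvectorUnitary : Matrix m m ℂ) with hU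
  set d : m → ℂ := RCLike.ofReal ∘ hH.eigenvalues with hd
  have hsU : star U * U = 1 := (Matrix.mem_unitaryGroup_iff').mp (hH.eigenvectorUnitary).2
  have hUs : U * star U = 1 := (Matrix.mem_unitaryGroup_iff).mp (hH.eigenvectorUnitary).2
  have hDD : diagonal d * diagonal d = diagonal d := by
    have e1 : (U * diagonal d * star U) * (U * diagonal d * star U) = U * diagonal d * star U := by
      rw [← hst]; exact hpure
    have e2 : U * (diagonal d * diagonal d) * star U = U * diagonal d * star U := by
      calc U * (diagonal d * diagonal d) * star U
          = (U * diagonal d) * (star U * U) * (diagonal d * star U) := by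
            rw [hsU]; noncomm_ring
        _ = (U * diagonal d * star U) * (U * diagonal d * star U) := by noncomm_ring
        _ = U * diagonal d * star U := e1
    calc diagonal d * diagonal d
        = (star U * U) * (diagonal d * diagonal d) * (star U * U) := by rw [hsU]; noncomm_ring
      _ = star U * (U * (diagonal d * diagonal d) * star U) * U := by noncomm_ring
      _ = star U * (U * diagonal d * star U) * U := by rw [e2]
      _ = (star U * U) * diagonal d * (star U * U) := by noncomm_ring
      _ = diagonal d := by rw [hsU]; noncomm_ring
  have hev : ∀ i, d i = 0 ∨ d i = 1 := by
    intro i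
    have : d i * d i = d i := by
      have := congrFun (congrFun hDD i) i
      simpa [diagonal_mul_diagonal, diagonal_apply_eq] using this
    have h2 : d i * (d i - 1) = 0 := by linear_combination this
    rcases mul_eq_zero.mp h2 with h0 | h1
    · exact Or.inl h0
    · exact Or.inr (by linear_combination h1)
  have htr : ∑ i, d i = 1 := by
    have : (U * diagonal d * star U).trace = 1 := by rw [← hst]; exact ht
    rw [trace_mul_cycle, hsU, Matrix.one_mul, trace_diagonal] at this
    exact this
  have hcard : (univ.filter fun i => d i = 1).card = 1 := by
    have h1 : ∑ i ∈ univ.filter (fun i => d i = 1), d i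
        = ((univ.filter fun i => d i = 1).card : ℂ) := by
      rw [Finset.sum_congr rfl (fun i hi => (Finset.mem_filter.mp hi).2)]
      simp
    have h2 : ∑ i ∈ univ.filter (fun i => ¬ d i = 1), d i = 0 := by
      refine Finset.sum_eq_zero fun i hi => ?_
      rcases hev i with h0 | hone
      · exact h0
      · exact absurd hone (Finset.mem_filter.mp hi).2
    have : ∑ i, d i = ((univ.filter fun i => d i = 1).card : ℂ) := by
      rw [← Finset.sum_filter_add_sum_filter_not univ (fun i => d i = 1), h1, h2, add_zero]
    rw [htr] at this
    exact_mod_cast this.symm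
  obtain ⟨i0, hi0⟩ := Finset.card_eq_one.mp hcard
  have hdsingle : d = Pi.single i0 1 := by
    funext i
    by_cases hi : i = i0
    · subst hi
      have : i ∈ univ.filter fun i => d i = 1 := by rw [hi0]; exact Finset.mem_singleton_self i
      simpa using (Finset.mem_filter.mp this).2
    · have : i ∉ univ.filter fun j => d j = 1 := by rw [hi0]; simpa using hi
      have hne : d i ≠ 1 := by simpa using this
      rcases hev i with h0 | h1
      · simp [h0, Pi.single_apply, hi]
      · exact absurd h1 hne
  refine ⟨fun x => U x i0, fun x y => ?_⟩
  have := congrFun (congrFun hst x) y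
  rw [hdsingle] at this
  rw [this]
  simp [Matrix.mul_apply, diagonal_apply, Pi.single_apply, conjTranspose_apply,
    Finset.mul_sum, Finset.sum_ite_eq, Finset.sum_ite_eq', hU]

lemma trace_outer (w : Fin 3 → Fin 4) (ψ : (Fin 3 → Fin 2) → ℂ) :
    (pWord w * Matrix.of (fun x y => ψ x * (starRingEnd ℂ) (ψ y))).trace
    = ∑ a : Fin 2, ∑ b : Fin 2, ∑ c : Fin 2, ∑ a' : Fin 2, ∑ b' : Fin 2, ∑ c' : Fin 2,
        (pauli (w 0) a a' * pauli (w 1) b b' * pauli (w 2) c c')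
          * ψ ![a', b', c'] * (starRingEnd ℂ) (ψ ![a, b, c]) := by
  rw [Matrix.trace]
  unfold Matrix.diag
  simp only [Matrix.mul_apply, pWord, Matrix.of_apply, Fin.prod_univ_three]
  rw [sum_fn3]
  congr 1; ext a; congr 1; ext b; congr 1; ext c
  rw [sum_fn3 (f := fun y => (pauli (w 0) (![a,b,c] 0) (y 0) * pauli (w 1) (![a,b,c] 1) (y 1) *
      pauli (w 2) (![a,b,c] 2) (y 2)) * (ψ y * (starRingEnd ℂ) (ψ ![a,b,c])))]
  simp only [Matrix.cons_val_zero, Matrix.cons_val_one, Matrix.head_cons,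
    Matrix.cons_val_two, Matrix.tail_cons]
  exact Finset.sum_congr rfl fun _ _ => Finset.sum_congr rfl fun _ _ =>
    Finset.sum_congr rfl fun _ _ => by ring


lemma wtv_000 : wt ![0,0,0] = 0 := by decide
lemma wtv_001 : wt ![0,0,1] = 1 := by decide
lemma wtv_002 : wt ![0,0,2] = 1 := by decide
lemma wtv_003 : wt ![0,0,3] = 1 := by decide
lemma wtv_010 : wt ![0,1,0] = 1 := by decide
lemma wtv_011 : wt ![0,1,1] = 2 := by decide
lemma wtv_012 : wt ![0,1,2] = 2 := by decide
lemma wtv_013 : wt ![0,1,3] = 2 := by decide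
lemma wtv_020 : wt ![0,2,0] = 1 := by decide
lemma wtv_021 : wt ![0,2,1] = 2 := by decide
lemma wtv_022 : wt ![0,2,2] = 2 := by decide
lemma wtv_023 : wt ![0,2,3] = 2 := by decide
lemma wtv_030 : wt ![0,3,0] = 1 := by decide
lemma wtv_031 : wt ![0,3,1] = 2 := by decide
lemma wtv_032 : wt ![0,3,2] = 2 := by decide
lemma wtv_033 : wt ![0,3,3] = 2 := by decide
lemma wtv_100 : wt ![1,0,0] = 1 := by decide
lemma wtv_101 : wt ![1,0,1] = 2 := by decide
lemma wtv_102 : wt ![1,0,2] = 2 := by decide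
lemma wtv_103 : wt ![1,0,3] = 2 := by decide
lemma wtv_110 : wt ![1,1,0] = 2 := by decide
lemma wtv_111 : wt ![1,1,1] = 3 := by decide
lemma wtv_112 : wt ![1,1,2] = 3 := by decide
lemma wtv_113 : wt ![1,1,3] = 3 := by decide
lemma wtv_120 : wt ![1,2,0] = 2 := by decide
lemma wtv_121 : wt ![1,2,1] = 3 := by decide
lemma wtv_122 : wt ![1,2,2] = 3 := by decide
lemma wtv_123 : wt ![1,2,3] = 3 := by decide
lemma wtv_130 : wt ![1,3,0] = 2 := by decide
lemma wtv_131 : wt ![1,3,1] = 3 := by decide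
lemma wtv_132 : wt ![1,3,2] = 3 := by decide
lemma wtv_133 : wt ![1,3,3] = 3 := by decide
lemma wtv_200 : wt ![2,0,0] = 1 := by decide
lemma wtv_201 : wt ![2,0,1] = 2 := by decide
lemma wtv_202 : wt ![2,0,2] = 2 := by decide
lemma wtv_203 : wt ![2,0,3] = 2 := by decide
lemma wtv_210 : wt ![2,1,0] = 2 := by decide
lemma wtv_211 : wt ![2,1,1] = 3 := by decide
lemma wtv_212 : wt ![2,1,2] = 3 := by decide
lemma wtv_213 : wt ![2,1,3] = 3 := by decide
lemma wtv_220 : wt ![2,2,0] = 2 := by decide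
lemma wtv_221 : wt ![2,2,1] = 3 := by decide
lemma wtv_222 : wt ![2,2,2] = 3 := by decide
lemma wtv_223 : wt ![2,2,3] = 3 := by decide
lemma wtv_230 : wt ![2,3,0] = 2 := by decide
lemma wtv_231 : wt ![2,3,1] = 3 := by decide
lemma wtv_232 : wt ![2,3,2] = 3 := by decide
lemma wtv_233 : wt ![2,3,3] = 3 := by decide
lemma wtv_300 : wt ![3,0,0] = 1 := by decide
lemma wtv_301 : wt ![3,0,1] = 2 := by decide
lemma wtv_302 : wt ![3,0,2] = 2 := by decide
lemma wtv_303 : wt ![3,0,3] = 2 := by decide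
lemma wtv_310 : wt ![3,1,0] = 2 := by decide
lemma wtv_311 : wt ![3,1,1] = 3 := by decide
lemma wtv_312 : wt ![3,1,2] = 3 := by decide
lemma wtv_313 : wt ![3,1,3] = 3 := by decide
lemma wtv_320 : wt ![3,2,0] = 2 := by decide
lemma wtv_321 : wt ![3,2,1] = 3 := by decide
lemma wtv_322 : wt ![3,2,2] = 3 := by decide
lemma wtv_323 : wt ![3,2,3] = 3 := by decide
lemma wtv_330 : wt ![3,3,0] = 2 := by decide
lemma wtv_331 : wt ![3,3,1] = 3 := by decide
lemma wtv_332 : wt ![3,3,2] = 3 := by decide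
lemma wtv_333 : wt ![3,3,3] = 3 := by decide

lemma tr_011 (ψ : (Fin 3 → Fin 2) → ℂ) :
    (pWord ![0,1,1] * Matrix.of (fun x y => ψ x * (starRingEnd ℂ) (ψ y))).trace
    = (ψ ![0,1,1] * (starRingEnd ℂ) (ψ ![0,0,0]) + ψ ![0,1,0] * (starRingEnd ℂ) (ψ ![0,0,1]) + ψ ![0,0,1] * (starRingEnd ℂ) (ψ ![0,1,0]) + ψ ![0,0,0] * (starRingEnd ℂ) (ψ ![0,1,1]) + ψ ![1,1,1] * (starRingEnd ℂ) (ψ ![1,0,0]) + ψ ![1,1,0] * (starRingEnd ℂ) (ψ ![1,0,1]) + ψ ![1,0,1] * (starRingEnd ℂ) (ψ ![1,1,0]) + ψ ![1,0,0] * (starRingEnd ℂ) (ψ ![1,1,1])) := by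
  rw [trace_outer]
  simp only [Matrix.cons_val_zero, Matrix.cons_val_one, Matrix.head_cons, Matrix.cons_val_two,
    Matrix.tail_cons, Fin.sum_univ_two,
    p000, p001, p010, p011, p100, p101, p110, p111, p200, p201, p210, p211, p300, p301, p310, p311,
    mul_zero, zero_mul, mul_one, one_mul, add_zero, zero_add, neg_mul, mul_neg, neg_neg,
    Complex.I_mul_I]
  ring

lemma tr_012 (ψ : (Fin 3 → Fin 2) → ℂ) :
    (pWord ![0,1,2] * Matrix.of (fun x y => ψ x * (starRingEnd ℂ) (ψ y))).trace
    = Complex.I * (-ψ ![0,1,1] * (starRingEnd ℂ) (ψ ![0,0,0]) + ψ ![0,1,0] * (starRingEnd ℂ) (ψ ![0,0,1]) - ψ ![0,0,1] * (starRingEnd ℂ) (ψ ![0,1,0]) + ψ ![0,0,0] * (starRingEnd ℂ) (ψ ![0,1,1]) - ψ ![1,1,1] * (starRingEnd ℂ) (ψ ![1,0,0]) + ψ ![1,1,0] * (starRingEnd ℂ) (ψ ![1,0,1]) - ψ ![1,0,1] * (starRingEnd ℂ) (ψ ![1,1,0]) + ψ ![1,0,0] * (starRingEnd ℂ) (ψ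 ![1,1,1])) := by
  rw [trace_outer]
  simp only [Matrix.cons_val_zero, Matrix.cons_val_one, Matrix.head_cons, Matrix.cons_val_two,
    Matrix.tail_cons, Fin.sum_univ_two,
    p000, p001, p010, p011, p100, p101, p110, p111, p200, p201, p210, p211, p300, p301, p310, p311,
    mul_zero, zero_mul, mul_one, one_mul, add_zero, zero_add, neg_mul, mul_neg, neg_neg,
    Complex.I_mul_I]
  ring

lemma tr_013 (ψ : (Fin 3 → Fin 2) → ℂ) :
    (pWord ![0,1,3] * Matrix.of (fun x y => ψ x * (starRingEnd ℂ) (ψ y))).trace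
    = (ψ ![0,1,0] * (starRingEnd ℂ) (ψ ![0,0,0]) - ψ ![0,1,1] * (starRingEnd ℂ) (ψ ![0,0,1]) + ψ ![0,0,0] * (starRingEnd ℂ) (ψ ![0,1,0]) - ψ ![0,0,1] * (starRingEnd ℂ) (ψ ![0,1,1]) + ψ ![1,1,0] * (starRingEnd ℂ) (ψ ![1,0,0]) - ψ ![1,1,1] * (starRingEnd ℂ) (ψ ![1,0,1]) + ψ ![1,0,0] * (starRingEnd ℂ) (ψ ![1,1,0]) - ψ ![1,0,1] * (starRingEnd ℂ) (ψ ![1,1,1])) := by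
  rw [trace_outer]
  simp only [Matrix.cons_val_zero, Matrix.cons_val_one, Matrix.head_cons, Matrix.cons_val_two,
    Matrix.tail_cons, Fin.sum_univ_two,
    p000, p001, p010, p011, p100, p101, p110, p111, p200, p201, p210, p211, p300, p301, p310, p311,
    mul_zero, zero_mul, mul_one, one_mul, add_zero, zero_add, neg_mul, mul_neg, neg_neg,
    Complex.I_mul_I]
  ring

lemma tr_021 (ψ : (Fin 3 → Fin 2) → ℂ) :
    (pWord ![0,2,1] * Matrix.of (fun x y => ψ x * (starRingEnd ℂ) (ψ y))).trace
    = Complex.I * (-ψ ![0,1,1] * (starRingEnd ℂ) (ψ ![0,0,0]) - ψ ![0,1,0] * (starRingEnd ℂ) (ψ ![0,0,1]) + ψ ![0,0,1] * (starRingEnd ℂ) (ψ ![0,1,0]) + ψ ![0,0,0] * (starRingEnd ℂ) (ψ ![0,1,1]) - ψ ![1,1,1] * (starRingEnd ℂ) (ψ ![1,0,0]) - ψ ![1,1,0] * (starRingEnd ℂ) (ψ ![1,0,1]) + ψ ![1,0,1] * (starRingEnd ℂ) (ψ ![1,1,0]) + ψ ![1,0,0] * (starRingEnd ℂ) (ψ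 ![1,1,1])) := by
  rw [trace_outer]
  simp only [Matrix.cons_val_zero, Matrix.cons_val_one, Matrix.head_cons, Matrix.cons_val_two,
    Matrix.tail_cons, Fin.sum_univ_two,
    p000, p001, p010, p011, p100, p101, p110, p111, p200, p201, p210, p211, p300, p301, p310, p311,
    mul_zero, zero_mul, mul_one, one_mul, add_zero, zero_add, neg_mul, mul_neg, neg_neg,
    Complex.I_mul_I]
  ring

lemma tr_022 (ψ : (Fin 3 → Fin 2) → ℂ) :
    (pWord ![0,2,2] * Matrix.of (fun x y => ψ x * (starRingEnd ℂ) (ψ y))).trace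
    = (-ψ ![0,1,1] * (starRingEnd ℂ) (ψ ![0,0,0]) + ψ ![0,1,0] * (starRingEnd ℂ) (ψ ![0,0,1]) + ψ ![0,0,1] * (starRingEnd ℂ) (ψ ![0,1,0]) - ψ ![0,0,0] * (starRingEnd ℂ) (ψ ![0,1,1]) - ψ ![1,1,1] * (starRingEnd ℂ) (ψ ![1,0,0]) + ψ ![1,1,0] * (starRingEnd ℂ) (ψ ![1,0,1]) + ψ ![1,0,1] * (starRingEnd ℂ) (ψ ![1,1,0]) - ψ ![1,0,0] * (starRingEnd ℂ) (ψ ![1,1,1])) := by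
  rw [trace_outer]
  simp only [Matrix.cons_val_zero, Matrix.cons_val_one, Matrix.head_cons, Matrix.cons_val_two,
    Matrix.tail_cons, Fin.sum_univ_two,
    p000, p001, p010, p011, p100, p101, p110, p111, p200, p201, p210, p211, p300, p301, p310, p311,
    mul_zero, zero_mul, mul_one, one_mul, add_zero, zero_add, neg_mul, mul_neg, neg_neg,
    Complex.I_mul_I]
  ring

lemma tr_023 (ψ : (Fin 3 → Fin 2) → ℂ) :
    (pWord ![0,2,3] * Matrix.of (fun x y => ψ x * (starRingEnd ℂ) (ψ y))).trace
    = Complex.I * (-ψ ![0,1,0] * (starRingEnd ℂ) (ψ ![0,0,0]) + ψ ![0,1,1] * (starRingEnd ℂ) (ψ ![0,0,1]) + ψ ![0,0,0] * (starRingEnd ℂ) (ψ ![0,1,0]) - ψ ![0,0,1] * (starRingEnd ℂ) (ψ ![0,1,1]) - ψ ![1,1,0] * (starRingEnd ℂ) (ψ ![1,0,0]) + ψ ![1,1,1] * (starRingEnd ℂ) (ψ ![1,0,1]) + ψ ![1,0,0] * (starRingEnd ℂ) (ψ ![1,1,0]) - ψ ![1,0,1] * (starRingEnd ℂ) (ψ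 ![1,1,1])) := by
  rw [trace_outer]
  simp only [Matrix.cons_val_zero, Matrix.cons_val_one, Matrix.head_cons, Matrix.cons_val_two,
    Matrix.tail_cons, Fin.sum_univ_two,
    p000, p001, p010, p011, p100, p101, p110, p111, p200, p201, p210, p211, p300, p301, p310, p311,
    mul_zero, zero_mul, mul_one, one_mul, add_zero, zero_add, neg_mul, mul_neg, neg_neg,
    Complex.I_mul_I]
  ring

lemma tr_031 (ψ : (Fin 3 → Fin 2) → ℂ) :
    (pWord ![0,3,1] * Matrix.of (fun x y => ψ x * (starRingEnd ℂ) (ψ y))).trace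
    = (ψ ![0,0,1] * (starRingEnd ℂ) (ψ ![0,0,0]) + ψ ![0,0,0] * (starRingEnd ℂ) (ψ ![0,0,1]) - ψ ![0,1,1] * (starRingEnd ℂ) (ψ ![0,1,0]) - ψ ![0,1,0] * (starRingEnd ℂ) (ψ ![0,1,1]) + ψ ![1,0,1] * (starRingEnd ℂ) (ψ ![1,0,0]) + ψ ![1,0,0] * (starRingEnd ℂ) (ψ ![1,0,1]) - ψ ![1,1,1] * (starRingEnd ℂ) (ψ ![1,1,0]) - ψ ![1,1,0] * (starRingEnd ℂ) (ψ ![1,1,1])) := by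
  rw [trace_outer]
  simp only [Matrix.cons_val_zero, Matrix.cons_val_one, Matrix.head_cons, Matrix.cons_val_two,
    Matrix.tail_cons, Fin.sum_univ_two,
    p000, p001, p010, p011, p100, p101, p110, p111, p200, p201, p210, p211, p300, p301, p310, p311,
    mul_zero, zero_mul, mul_one, one_mul, add_zero, zero_add, neg_mul, mul_neg, neg_neg,
    Complex.I_mul_I]
  ring

lemma tr_032 (ψ : (Fin 3 → Fin 2) → ℂ) :
    (pWord ![0,3,2] * Matrix.of (fun x y => ψ x * (starRingEnd ℂ) (ψ y))).trace
    = Complex.I * (-ψ ![0,0,1] * (starRingEnd ℂ) (ψ ![0,0,0]) + ψ ![0,0,0] * (starRingEnd ℂ) (ψ ![0,0,1]) + ψ ![0,1,1] * (starRingEnd ℂ) (ψ ![0,1,0]) - ψ ![0,1,0] * (starRingEnd ℂ) (ψ ![0,1,1]) - ψ ![1,0,1] * (starRingEnd ℂ) (ψ ![1,0,0]) + ψ ![1,0,0] * (starRingEnd ℂ) (ψ ![1,0,1]) + ψ ![1,1,1] * (starRingEnd ℂ) (ψ ![1,1,0]) - ψ ![1,1,0] * (starRingEnd ℂ) (ψ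 ![1,1,1])) := by
  rw [trace_outer]
  simp only [Matrix.cons_val_zero, Matrix.cons_val_one, Matrix.head_cons, Matrix.cons_val_two,
    Matrix.tail_cons, Fin.sum_univ_two,
    p000, p001, p010, p011, p100, p101, p110, p111, p200, p201, p210, p211, p300, p301, p310, p311,
    mul_zero, zero_mul, mul_one, one_mul, add_zero, zero_add, neg_mul, mul_neg, neg_neg,
    Complex.I_mul_I]
  ring

lemma tr_033 (ψ : (Fin 3 → Fin 2) → ℂ) :
    (pWord ![0,3,3] * Matrix.of (fun x y => ψ x * (starRingEnd ℂ) (ψ y))).trace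
    = (ψ ![0,0,0] * (starRingEnd ℂ) (ψ ![0,0,0]) - ψ ![0,0,1] * (starRingEnd ℂ) (ψ ![0,0,1]) - ψ ![0,1,0] * (starRingEnd ℂ) (ψ ![0,1,0]) + ψ ![0,1,1] * (starRingEnd ℂ) (ψ ![0,1,1]) + ψ ![1,0,0] * (starRingEnd ℂ) (ψ ![1,0,0]) - ψ ![1,0,1] * (starRingEnd ℂ) (ψ ![1,0,1]) - ψ ![1,1,0] * (starRingEnd ℂ) (ψ ![1,1,0]) + ψ ![1,1,1] * (starRingEnd ℂ) (ψ ![1,1,1])) := by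
  rw [trace_outer]
  simp only [Matrix.cons_val_zero, Matrix.cons_val_one, Matrix.head_cons, Matrix.cons_val_two,
    Matrix.tail_cons, Fin.sum_univ_two,
    p000, p001, p010, p011, p100, p101, p110, p111, p200, p201, p210, p211, p300, p301, p310, p311,
    mul_zero, zero_mul, mul_one, one_mul, add_zero, zero_add, neg_mul, mul_neg, neg_neg,
    Complex.I_mul_I]
  ring

lemma tr_101 (ψ : (Fin 3 → Fin 2) → ℂ) :
    (pWord ![1,0,1] * Matrix.of (fun x y => ψ x * (starRingEnd ℂ) (ψ y))).trace
    = (ψ ![1,0,1] * (starRingEnd ℂ) (ψ ![0,0,0]) + ψ ![1,0,0] * (starRingEnd ℂ) (ψ ![0,0,1]) + ψ ![1,1,1] * (starRingEnd ℂ) (ψ ![0,1,0]) + ψ ![1,1,0] * (starRingEnd ℂ) (ψ ![0,1,1]) + ψ ![0,0,1] * (starRingEnd ℂ) (ψ ![1,0,0]) + ψ ![0,0,0] * (starRingEnd ℂ) (ψ ![1,0,1]) + ψ ![0,1,1] * (starRingEnd ℂ) (ψ ![1,1,0]) + ψ ![0,1,0] * (starRingEnd ℂ) (ψ ![1,1,1]))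 := by
  rw [trace_outer]
  simp only [Matrix.cons_val_zero, Matrix.cons_val_one, Matrix.head_cons, Matrix.cons_val_two,
    Matrix.tail_cons, Fin.sum_univ_two,
    p000, p001, p010, p011, p100, p101, p110, p111, p200, p201, p210, p211, p300, p301, p310, p311,
    mul_zero, zero_mul, mul_one, one_mul, add_zero, zero_add, neg_mul, mul_neg, neg_neg,
    Complex.I_mul_I]
  ring

lemma tr_102 (ψ : (Fin 3 → Fin 2) → ℂ) :
    (pWord ![1,0,2] * Matrix.of (fun x y => ψ x * (starRingEnd ℂ) (ψ y))).trace
    = Complex.I * (-ψ ![1,0,1] * (starRingEnd ℂ) (ψ ![0,0,0]) + ψ ![1,0,0] * (starRingEnd ℂ) (ψ ![0,0,1]) - ψ ![1,1,1] * (starRingEnd ℂ) (ψ ![0,1,0]) + ψ ![1,1,0] * (starRingEnd ℂ) (ψ ![0,1,1]) - ψ ![0,0,1] * (starRingEnd ℂ) (ψ ![1,0,0]) + ψ ![0,0,0] * (starRingEnd ℂ) (ψ ![1,0,1]) - ψ ![0,1,1] * (starRingEnd ℂ) (ψ ![1,1,0]) + ψ ![0,1,0] * (starRingEnd ℂ)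 (ψ ![1,1,1])) := by
  rw [trace_outer]
  simp only [Matrix.cons_val_zero, Matrix.cons_val_one, Matrix.head_cons, Matrix.cons_val_two,
    Matrix.tail_cons, Fin.sum_univ_two,
    p000, p001, p010, p011, p100, p101, p110, p111, p200, p201, p210, p211, p300, p301, p310, p311,
    mul_zero, zero_mul, mul_one, one_mul, add_zero, zero_add, neg_mul, mul_neg, neg_neg,
    Complex.I_mul_I]
  ring

lemma tr_103 (ψ : (Fin 3 → Fin 2) → ℂ) :
    (pWord ![1,0,3] * Matrix.of (fun x y => ψ x * (starRingEnd ℂ) (ψ y))).trace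
    = (ψ ![1,0,0] * (starRingEnd ℂ) (ψ ![0,0,0]) - ψ ![1,0,1] * (starRingEnd ℂ) (ψ ![0,0,1]) + ψ ![1,1,0] * (starRingEnd ℂ) (ψ ![0,1,0]) - ψ ![1,1,1] * (starRingEnd ℂ) (ψ ![0,1,1]) + ψ ![0,0,0] * (starRingEnd ℂ) (ψ ![1,0,0]) - ψ ![0,0,1] * (starRingEnd ℂ) (ψ ![1,0,1]) + ψ ![0,1,0] * (starRingEnd ℂ) (ψ ![1,1,0]) - ψ ![0,1,1] * (starRingEnd ℂ) (ψ ![1,1,1])) := by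
  rw [trace_outer]
  simp only [Matrix.cons_val_zero, Matrix.cons_val_one, Matrix.head_cons, Matrix.cons_val_two,
    Matrix.tail_cons, Fin.sum_univ_two,
    p000, p001, p010, p011, p100, p101, p110, p111, p200, p201, p210, p211, p300, p301, p310, p311,
    mul_zero, zero_mul, mul_one, one_mul, add_zero, zero_add, neg_mul, mul_neg, neg_neg,
    Complex.I_mul_I]
  ring

lemma tr_110 (ψ : (Fin 3 → Fin 2) → ℂ) :
    (pWord ![1,1,0] * Matrix.of (fun x y => ψ x * (starRingEnd ℂ) (ψ y))).trace
    = (ψ ![1,1,0] * (starRingEnd ℂ) (ψ ![0,0,0]) + ψ ![1,1,1] * (starRingEnd ℂ) (ψ ![0,0,1]) + ψ ![1,0,0] * (starRingEnd ℂ) (ψ ![0,1,0]) + ψ ![1,0,1] * (starRingEnd ℂ) (ψ ![0,1,1]) + ψ ![0,1,0] * (starRingEnd ℂ) (ψ ![1,0,0]) + ψ ![0,1,1] * (starRingEnd ℂ) (ψ ![1,0,1]) + ψ ![0,0,0] * (starRingEnd ℂ) (ψ ![1,1,0]) + ψ ![0,0,1] * (starRingEnd ℂ) (ψ ![1,1,1]))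 := by
  rw [trace_outer]
  simp only [Matrix.cons_val_zero, Matrix.cons_val_one, Matrix.head_cons, Matrix.cons_val_two,
    Matrix.tail_cons, Fin.sum_univ_two,
    p000, p001, p010, p011, p100, p101, p110, p111, p200, p201, p210, p211, p300, p301, p310, p311,
    mul_zero, zero_mul, mul_one, one_mul, add_zero, zero_add, neg_mul, mul_neg, neg_neg,
    Complex.I_mul_I]
  ring

lemma tr_120 (ψ : (Fin 3 → Fin 2) → ℂ) :
    (pWord ![1,2,0] * Matrix.of (fun x y => ψ x * (starRingEnd ℂ) (ψ y))).trace
    = Complex.I * (-ψ ![1,1,0] * (starRingEnd ℂ) (ψ ![0,0,0]) - ψ ![1,1,1] * (starRingEnd ℂ) (ψ ![0,0,1]) + ψ ![1,0,0] * (starRingEnd ℂ) (ψ ![0,1,0]) + ψ ![1,0,1] * (starRingEnd ℂ) (ψ ![0,1,1]) - ψ ![0,1,0] * (starRingEnd ℂ) (ψ ![1,0,0]) - ψ ![0,1,1] * (starRingEnd ℂ) (ψ ![1,0,1]) + ψ ![0,0,0] * (starRingEnd ℂ) (ψ ![1,1,0]) + ψ ![0,0,1] * (starRingEnd ℂ)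 (ψ ![1,1,1])) := by
  rw [trace_outer]
  simp only [Matrix.cons_val_zero, Matrix.cons_val_one, Matrix.head_cons, Matrix.cons_val_two,
    Matrix.tail_cons, Fin.sum_univ_two,
    p000, p001, p010, p011, p100, p101, p110, p111, p200, p201, p210, p211, p300, p301, p310, p311,
    mul_zero, zero_mul, mul_one, one_mul, add_zero, zero_add, neg_mul, mul_neg, neg_neg,
    Complex.I_mul_I]
  ring

lemma tr_130 (ψ : (Fin 3 → Fin 2) → ℂ) :
    (pWord ![1,3,0] * Matrix.of (fun x y => ψ x * (starRingEnd ℂ) (ψ y))).trace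
    = (ψ ![1,0,0] * (starRingEnd ℂ) (ψ ![0,0,0]) + ψ ![1,0,1] * (starRingEnd ℂ) (ψ ![0,0,1]) - ψ ![1,1,0] * (starRingEnd ℂ) (ψ ![0,1,0]) - ψ ![1,1,1] * (starRingEnd ℂ) (ψ ![0,1,1]) + ψ ![0,0,0] * (starRingEnd ℂ) (ψ ![1,0,0]) + ψ ![0,0,1] * (starRingEnd ℂ) (ψ ![1,0,1]) - ψ ![0,1,0] * (starRingEnd ℂ) (ψ ![1,1,0]) - ψ ![0,1,1] * (starRingEnd ℂ) (ψ ![1,1,1])) := by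
  rw [trace_outer]
  simp only [Matrix.cons_val_zero, Matrix.cons_val_one, Matrix.head_cons, Matrix.cons_val_two,
    Matrix.tail_cons, Fin.sum_univ_two,
    p000, p001, p010, p011, p100, p101, p110, p111, p200, p201, p210, p211, p300, p301, p310, p311,
    mul_zero, zero_mul, mul_one, one_mul, add_zero, zero_add, neg_mul, mul_neg, neg_neg,
    Complex.I_mul_I]
  ring

lemma tr_201 (ψ : (Fin 3 → Fin 2) → ℂ) :
    (pWord ![2,0,1] * Matrix.of (fun x y => ψ x * (starRingEnd ℂ) (ψ y))).trace
    = Complex.I * (-ψ ![1,0,1] * (starRingEnd ℂ) (ψ ![0,0,0]) - ψ ![1,0,0] * (starRingEnd ℂ) (ψ ![0,0,1]) - ψ ![1,1,1] * (starRingEnd ℂ) (ψ ![0,1,0]) - ψ ![1,1,0] * (starRingEnd ℂ) (ψ ![0,1,1]) + ψ ![0,0,1] * (starRingEnd ℂ) (ψ ![1,0,0]) + ψ ![0,0,0] * (starRingEnd ℂ) (ψ ![1,0,1]) + ψ ![0,1,1] * (starRingEnd ℂ) (ψ ![1,1,0]) + ψ ![0,1,0] * (starRingEnd ℂ) (ψ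 ![1,1,1])) := by
  rw [trace_outer]
  simp only [Matrix.cons_val_zero, Matrix.cons_val_one, Matrix.head_cons, Matrix.cons_val_two,
    Matrix.tail_cons, Fin.sum_univ_two,
    p000, p001, p010, p011, p100, p101, p110, p111, p200, p201, p210, p211, p300, p301, p310, p311,
    mul_zero, zero_mul, mul_one, one_mul, add_zero, zero_add, neg_mul, mul_neg, neg_neg,
    Complex.I_mul_I]
  ring

lemma tr_202 (ψ : (Fin 3 → Fin 2) → ℂ) :
    (pWord ![2,0,2] * Matrix.of (fun x y => ψ x * (starRingEnd ℂ) (ψ y))).trace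
    = (-ψ ![1,0,1] * (starRingEnd ℂ) (ψ ![0,0,0]) + ψ ![1,0,0] * (starRingEnd ℂ) (ψ ![0,0,1]) - ψ ![1,1,1] * (starRingEnd ℂ) (ψ ![0,1,0]) + ψ ![1,1,0] * (starRingEnd ℂ) (ψ ![0,1,1]) + ψ ![0,0,1] * (starRingEnd ℂ) (ψ ![1,0,0]) - ψ ![0,0,0] * (starRingEnd ℂ) (ψ ![1,0,1]) + ψ ![0,1,1] * (starRingEnd ℂ) (ψ ![1,1,0]) - ψ ![0,1,0] * (starRingEnd ℂ) (ψ ![1,1,1])) := by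
  rw [trace_outer]
  simp only [Matrix.cons_val_zero, Matrix.cons_val_one, Matrix.head_cons, Matrix.cons_val_two,
    Matrix.tail_cons, Fin.sum_univ_two,
    p000, p001, p010, p011, p100, p101, p110, p111, p200, p201, p210, p211, p300, p301, p310, p311,
    mul_zero, zero_mul, mul_one, one_mul, add_zero, zero_add, neg_mul, mul_neg, neg_neg,
    Complex.I_mul_I]
  ring

lemma tr_203 (ψ : (Fin 3 → Fin 2) → ℂ) :
    (pWord ![2,0,3] * Matrix.of (fun x y => ψ x * (starRingEnd ℂ) (ψ y))).trace
    = Complex.I * (-ψ ![1,0,0] * (starRingEnd ℂ) (ψ ![0,0,0]) + ψ ![1,0,1] * (starRingEnd ℂ) (ψ ![0,0,1]) - ψ ![1,1,0] * (starRingEnd ℂ) (ψ ![0,1,0]) + ψ ![1,1,1] * (starRingEnd ℂ) (ψ ![0,1,1]) + ψ ![0,0,0] * (starRingEnd ℂ) (ψ ![1,0,0]) - ψ ![0,0,1] * (starRingEnd ℂ) (ψ ![1,0,1]) + ψ ![0,1,0] * (starRingEnd ℂ) (ψ ![1,1,0]) - ψ ![0,1,1] * (starRingEnd ℂ) (ψ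 ![1,1,1])) := by
  rw [trace_outer]
  simp only [Matrix.cons_val_zero, Matrix.cons_val_one, Matrix.head_cons, Matrix.cons_val_two,
    Matrix.tail_cons, Fin.sum_univ_two,
    p000, p001, p010, p011, p100, p101, p110, p111, p200, p201, p210, p211, p300, p301, p310, p311,
    mul_zero, zero_mul, mul_one, one_mul, add_zero, zero_add, neg_mul, mul_neg, neg_neg,
    Complex.I_mul_I]
  ring

lemma tr_210 (ψ : (Fin 3 → Fin 2) → ℂ) :
    (pWord ![2,1,0] * Matrix.of (fun x y => ψ x * (starRingEnd ℂ) (ψ y))).trace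
    = Complex.I * (-ψ ![1,1,0] * (starRingEnd ℂ) (ψ ![0,0,0]) - ψ ![1,1,1] * (starRingEnd ℂ) (ψ ![0,0,1]) - ψ ![1,0,0] * (starRingEnd ℂ) (ψ ![0,1,0]) - ψ ![1,0,1] * (starRingEnd ℂ) (ψ ![0,1,1]) + ψ ![0,1,0] * (starRingEnd ℂ) (ψ ![1,0,0]) + ψ ![0,1,1] * (starRingEnd ℂ) (ψ ![1,0,1]) + ψ ![0,0,0] * (starRingEnd ℂ) (ψ ![1,1,0]) + ψ ![0,0,1] * (starRingEnd ℂ) (ψ ![1,1,1])) := by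
  rw [trace_outer]
  simp only [Matrix.cons_val_zero, Matrix.cons_val_one, Matrix.head_cons, Matrix.cons_val_two,
    Matrix.tail_cons, Fin.sum_univ_two,
    p000, p001, p010, p011, p100, p101, p110, p111, p200, p201, p210, p211, p300, p301, p310, p311,
    mul_zero, zero_mul, mul_one, one_mul, add_zero, zero_add, neg_mul, mul_neg, neg_neg,
    Complex.I_mul_I]
  ring

lemma tr_220 (ψ : (Fin 3 → Fin 2) → ℂ) :
    (pWord ![2,2,0] * Matrix.of (fun x y => ψ x * (starRingEnd ℂ) (ψ y))).trace
    = (-ψ ![1,1,0] * (starRingEnd ℂ) (ψ ![0,0,0]) - ψ ![1,1,1] * (starRingEnd ℂ) (ψ ![0,0,1]) + ψ ![1,0,0] * (starRingEnd ℂ) (ψ ![0,1,0]) + ψ ![1,0,1] * (starRingEnd ℂ) (ψ ![0,1,1]) + ψ ![0,1,0] * (starRingEnd ℂ) (ψ ![1,0,0]) + ψ ![0,1,1] * (starRingEnd ℂ) (ψ ![1,0,1]) - ψ ![0,0,0] * (starRingEnd ℂ) (ψ ![1,1,0]) - ψ ![0,0,1] * (starRingEnd ℂ) (ψ ![1,1,1]))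 := by
  rw [trace_outer]
  simp only [Matrix.cons_val_zero, Matrix.cons_val_one, Matrix.head_cons, Matrix.cons_val_two,
    Matrix.tail_cons, Fin.sum_univ_two,
    p000, p001, p010, p011, p100, p101, p110, p111, p200, p201, p210, p211, p300, p301, p310, p311,
    mul_zero, zero_mul, mul_one, one_mul, add_zero, zero_add, neg_mul, mul_neg, neg_neg,
    Complex.I_mul_I]
  ring

lemma tr_230 (ψ : (Fin 3 → Fin 2) → ℂ) :
    (pWord ![2,3,0] * Matrix.of (fun x y => ψ x * (starRingEnd ℂ) (ψ y))).trace
    = Complex.I * (-ψ ![1,0,0] * (starRingEnd ℂ) (ψ ![0,0,0]) - ψ ![1,0,1] * (starRingEnd ℂ) (ψ ![0,0,1]) + ψ ![1,1,0] * (starRingEnd ℂ) (ψ ![0,1,0]) + ψ ![1,1,1] * (starRingEnd ℂ) (ψ ![0,1,1]) + ψ ![0,0,0] * (starRingEnd ℂ) (ψ ![1,0,0]) + ψ ![0,0,1] * (starRingEnd ℂ) (ψ ![1,0,1]) - ψ ![0,1,0] * (starRingEnd ℂ) (ψ ![1,1,0]) - ψ ![0,1,1] * (starRingEnd ℂ)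 (ψ ![1,1,1])) := by
  rw [trace_outer]
  simp only [Matrix.cons_val_zero, Matrix.cons_val_one, Matrix.head_cons, Matrix.cons_val_two,
    Matrix.tail_cons, Fin.sum_univ_two,
    p000, p001, p010, p011, p100, p101, p110, p111, p200, p201, p210, p211, p300, p301, p310, p311,
    mul_zero, zero_mul, mul_one, one_mul, add_zero, zero_add, neg_mul, mul_neg, neg_neg,
    Complex.I_mul_I]
  ring

lemma tr_301 (ψ : (Fin 3 → Fin 2) → ℂ) :
    (pWord ![3,0,1] * Matrix.of (fun x y => ψ x * (starRingEnd ℂ) (ψ y))).trace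
    = (ψ ![0,0,1] * (starRingEnd ℂ) (ψ ![0,0,0]) + ψ ![0,0,0] * (starRingEnd ℂ) (ψ ![0,0,1]) + ψ ![0,1,1] * (starRingEnd ℂ) (ψ ![0,1,0]) + ψ ![0,1,0] * (starRingEnd ℂ) (ψ ![0,1,1]) - ψ ![1,0,1] * (starRingEnd ℂ) (ψ ![1,0,0]) - ψ ![1,0,0] * (starRingEnd ℂ) (ψ ![1,0,1]) - ψ ![1,1,1] * (starRingEnd ℂ) (ψ ![1,1,0]) - ψ ![1,1,0] * (starRingEnd ℂ) (ψ ![1,1,1])) := by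
  rw [trace_outer]
  simp only [Matrix.cons_val_zero, Matrix.cons_val_one, Matrix.head_cons, Matrix.cons_val_two,
    Matrix.tail_cons, Fin.sum_univ_two,
    p000, p001, p010, p011, p100, p101, p110, p111, p200, p201, p210, p211, p300, p301, p310, p311,
    mul_zero, zero_mul, mul_one, one_mul, add_zero, zero_add, neg_mul, mul_neg, neg_neg,
    Complex.I_mul_I]
  ring

lemma tr_302 (ψ : (Fin 3 → Fin 2) → ℂ) :
    (pWord ![3,0,2] * Matrix.of (fun x y => ψ x * (starRingEnd ℂ) (ψ y))).trace
    = Complex.I * (-ψ ![0,0,1] * (starRingEnd ℂ) (ψ ![0,0,0]) + ψ ![0,0,0] * (starRingEnd ℂ) (ψ ![0,0,1]) - ψ ![0,1,1] * (starRingEnd ℂ) (ψ ![0,1,0]) + ψ ![0,1,0] * (starRingEnd ℂ) (ψ ![0,1,1]) + ψ ![1,0,1] * (starRingEnd ℂ) (ψ ![1,0,0]) - ψ ![1,0,0] * (starRingEnd ℂ) (ψ ![1,0,1]) + ψ ![1,1,1] * (starRingEnd ℂ) (ψ ![1,1,0]) - ψ ![1,1,0] * (starRingEnd ℂ) (ψ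 ![1,1,1])) := by
  rw [trace_outer]
  simp only [Matrix.cons_val_zero, Matrix.cons_val_one, Matrix.head_cons, Matrix.cons_val_two,
    Matrix.tail_cons, Fin.sum_univ_two,
    p000, p001, p010, p011, p100, p101, p110, p111, p200, p201, p210, p211, p300, p301, p310, p311,
    mul_zero, zero_mul, mul_one, one_mul, add_zero, zero_add, neg_mul, mul_neg, neg_neg,
    Complex.I_mul_I]
  ring

lemma tr_303 (ψ : (Fin 3 → Fin 2) → ℂ) :
    (pWord ![3,0,3] * Matrix.of (fun x y => ψ x * (starRingEnd ℂ) (ψ y))).trace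
    = (ψ ![0,0,0] * (starRingEnd ℂ) (ψ ![0,0,0]) - ψ ![0,0,1] * (starRingEnd ℂ) (ψ ![0,0,1]) + ψ ![0,1,0] * (starRingEnd ℂ) (ψ ![0,1,0]) - ψ ![0,1,1] * (starRingEnd ℂ) (ψ ![0,1,1]) - ψ ![1,0,0] * (starRingEnd ℂ) (ψ ![1,0,0]) + ψ ![1,0,1] * (starRingEnd ℂ) (ψ ![1,0,1]) - ψ ![1,1,0] * (starRingEnd ℂ) (ψ ![1,1,0]) + ψ ![1,1,1] * (starRingEnd ℂ) (ψ ![1,1,1])) := by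
  rw [trace_outer]
  simp only [Matrix.cons_val_zero, Matrix.cons_val_one, Matrix.head_cons, Matrix.cons_val_two,
    Matrix.tail_cons, Fin.sum_univ_two,
    p000, p001, p010, p011, p100, p101, p110, p111, p200, p201, p210, p211, p300, p301, p310, p311,
    mul_zero, zero_mul, mul_one, one_mul, add_zero, zero_add, neg_mul, mul_neg, neg_neg,
    Complex.I_mul_I]
  ring

lemma tr_310 (ψ : (Fin 3 → Fin 2) → ℂ) :
    (pWord ![3,1,0] * Matrix.of (fun x y => ψ x * (starRingEnd ℂ) (ψ y))).trace
    = (ψ ![0,1,0] * (starRingEnd ℂ) (ψ ![0,0,0]) + ψ ![0,1,1] * (starRingEnd ℂ) (ψ ![0,0,1]) + ψ ![0,0,0] * (starRingEnd ℂ) (ψ ![0,1,0]) + ψ ![0,0,1] * (starRingEnd ℂ) (ψ ![0,1,1]) - ψ ![1,1,0] * (starRingEnd ℂ) (ψ ![1,0,0]) - ψ ![1,1,1] * (starRingEnd ℂ) (ψ ![1,0,1]) - ψ ![1,0,0] * (starRingEnd ℂ) (ψ ![1,1,0]) - ψ ![1,0,1] * (starRingEnd ℂ) (ψ ![1,1,1]))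 := by
  rw [trace_outer]
  simp only [Matrix.cons_val_zero, Matrix.cons_val_one, Matrix.head_cons, Matrix.cons_val_two,
    Matrix.tail_cons, Fin.sum_univ_two,
    p000, p001, p010, p011, p100, p101, p110, p111, p200, p201, p210, p211, p300, p301, p310, p311,
    mul_zero, zero_mul, mul_one, one_mul, add_zero, zero_add, neg_mul, mul_neg, neg_neg,
    Complex.I_mul_I]
  ring

lemma tr_320 (ψ : (Fin 3 → Fin 2) → ℂ) :
    (pWord ![3,2,0] * Matrix.of (fun x y => ψ x * (starRingEnd ℂ) (ψ y))).trace
    = Complex.I * (-ψ ![0,1,0] * (starRingEnd ℂ) (ψ ![0,0,0]) - ψ ![0,1,1] * (starRingEnd ℂ) (ψ ![0,0,1]) + ψ ![0,0,0] * (starRingEnd ℂ) (ψ ![0,1,0]) + ψ ![0,0,1] * (starRingEnd ℂ) (ψ ![0,1,1]) + ψ ![1,1,0] * (starRingEnd ℂ) (ψ ![1,0,0]) + ψ ![1,1,1] * (starRingEnd ℂ) (ψ ![1,0,1]) - ψ ![1,0,0] * (starRingEnd ℂ) (ψ ![1,1,0]) - ψ ![1,0,1] * (starRingEnd ℂ)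 (ψ ![1,1,1])) := by
  rw [trace_outer]
  simp only [Matrix.cons_val_zero, Matrix.cons_val_one, Matrix.head_cons, Matrix.cons_val_two,
    Matrix.tail_cons, Fin.sum_univ_two,
    p000, p001, p010, p011, p100, p101, p110, p111, p200, p201, p210, p211, p300, p301, p310, p311,
    mul_zero, zero_mul, mul_one, one_mul, add_zero, zero_add, neg_mul, mul_neg, neg_neg,
    Complex.I_mul_I]
  ring

lemma tr_330 (ψ : (Fin 3 → Fin 2) → ℂ) :
    (pWord ![3,3,0] * Matrix.of (fun x y => ψ x * (starRingEnd ℂ) (ψ y))).trace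
    = (ψ ![0,0,0] * (starRingEnd ℂ) (ψ ![0,0,0]) + ψ ![0,0,1] * (starRingEnd ℂ) (ψ ![0,0,1]) - ψ ![0,1,0] * (starRingEnd ℂ) (ψ ![0,1,0]) - ψ ![0,1,1] * (starRingEnd ℂ) (ψ ![0,1,1]) - ψ ![1,0,0] * (starRingEnd ℂ) (ψ ![1,0,0]) - ψ ![1,0,1] * (starRingEnd ℂ) (ψ ![1,0,1]) + ψ ![1,1,0] * (starRingEnd ℂ) (ψ ![1,1,0]) + ψ ![1,1,1] * (starRingEnd ℂ) (ψ ![1,1,1])) := by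
  rw [trace_outer]
  simp only [Matrix.cons_val_zero, Matrix.cons_val_one, Matrix.head_cons, Matrix.cons_val_two,
    Matrix.tail_cons, Fin.sum_univ_two,
    p000, p001, p010, p011, p100, p101, p110, p111, p200, p201, p210, p211, p300, p301, p310, p311,
    mul_zero, zero_mul, mul_one, one_mul, add_zero, zero_add, neg_mul, mul_neg, neg_neg,
    Complex.I_mul_I]
  ring


set_option maxHeartbeats 4000000 in
lemma key (ψ : (Fin 3 → Fin 2) → ℂ) :
    ∑ w ∈ Finset.univ.filter (fun w : Fin 3 → Fin 4 => wt w = 2),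
      ((pWord w * Matrix.of (fun x y => ψ x * (starRingEnd ℂ) (ψ y))).trace) ^ 2
    = 3 * (∑ x : Fin 3 → Fin 2, ψ x * (starRingEnd ℂ) (ψ x)) ^ 2 := by
  rw [Finset.sum_filter, sum_fn3]
  simp only [Fin.sum_univ_four, wtv_000, wtv_001, wtv_002, wtv_003, wtv_010, wtv_011, wtv_012, wtv_013, wtv_020, wtv_021, wtv_022, wtv_023, wtv_030, wtv_031, wtv_032, wtv_033, wtv_100, wtv_101, wtv_102, wtv_103, wtv_110, wtv_111, wtv_112, wtv_113, wtv_120, wtv_121, wtv_122, wtv_123, wtv_130, wtv_131, wtv_132, wtv_133, wtv_200, wtv_201, wtv_202, wtv_203, wtv_210, wtv_211, wtv_212, wtv_213, wtv_220, wtv_221, wtv_222, wtv_223, wtv_230, wtv_231, wtv_232, wtv_233, wtv_300, wtv_301, wtv_302, wtv_303, wtv_310, wtv_311, wtv_312, wtv_313, wtv_320, wtv_321, wtv_322, wtv_323, wtv_330, wtv_331, wtv_332, wtv_333]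
  norm_num
  rw [tr_011 ψ, tr_012 ψ, tr_013 ψ, tr_021 ψ, tr_022 ψ, tr_023 ψ, tr_031 ψ, tr_032 ψ, tr_033 ψ, tr_101 ψ, tr_102 ψ, tr_103 ψ, tr_110 ψ, tr_120 ψ, tr_130 ψ, tr_201 ψ, tr_202 ψ, tr_203 ψ, tr_210 ψ, tr_220 ψ, tr_230 ψ, tr_301 ψ, tr_302 ψ, tr_303 ψ, tr_310 ψ, tr_320 ψ, tr_330 ψ]
  simp only [mul_pow, Complex.I_sq, neg_one_mul]
  rw [sum_fn3 (f := fun x => ψ x * (starRingEnd ℂ) (ψ x))]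
  simp only [Fin.sum_univ_two]
  ring

set_option maxHeartbeats 1000000 in
/-- Every pure 3-qubit state has two-body sector length exactly `A₂ = 3`. -/
theorem pure_three_qubit_A2 (ρ : Matrix (Fin 3 → Fin 2) (Fin 3 → Fin 2) ℂ)
    (hρ : IsState ρ) (hpure : ρ * ρ = ρ) :
    sector 3 2 ρ = 3 := by
  obtain ⟨ψ, hψ⟩ := exists_rank_one ρ hρ.1 hρ.2 hpure
  have hρeq : ρ = Matrix.of (fun x y => ψ x * (starRingEnd ℂ) (ψ y)) := by
    ext x y; exact hψ x y
  have hsum : ∑ x : Fin 3 → Fin 2, ψ x * (starRingEnd ℂ) (ψ x) = 1 := by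
    have h := hρ.2
    rw [hρeq] at h
    simpa [Matrix.trace, Matrix.diag] using h
  have hkey : ∑ w ∈ Finset.univ.filter (fun w : Fin 3 → Fin 4 => wt w = 2),
      ((pWord w * ρ).trace) ^ 2 = 3 := by
    rw [hρeq, key, hsum]
    norm_num
  unfold sector
  have hre : ∀ w ∈ Finset.univ.filter (fun w : Fin 3 → Fin 4 => wt w = 2),
      ((pWord w * ρ).trace.re) ^ 2 = (((pWord w * ρ).trace) ^ 2).re := by
    intro w _
    have him := trace_pWord_real w ρ hρ.1.1
    rw [sq, sq, Complex.mul_re, him, mul_zero, sub_zero]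
  rw [Finset.sum_congr rfl hre, ← Complex.re_sum, hkey]
  norm_num

end Aux
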